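/- Under the assumptions of the previous statement, the relative entropy of the tilted measure W with respect to P × Q equals λ*D − Λ(λ*). Consequently R₁(P,Q,D) := inf { H(W'‖P×Q) : W' has first marginal P and E_{W'}[ρ] ≤ D } satisfies R₁(P,Q,D) ≤ λ*D − Λ(λ*). -/

import Mathlib

open MeasureTheory Real

/-- Relative entropy `H(μ‖ν) = ∫ log (dμ/dν) dμ` (real-valued; used under `μ ≪ ν`). -/
noncomputable def relEntropy {Ω : Type*} [MeasurableSpace Ω] (μ ν : Measure Ω) : ℝ :=
  ∫ x, Real.log (μ.rnDeriv ν x).toReal ∂μ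

namespace RelEntAux
open ProbabilityTheory Filter
open scoped ENNReal NNReal


lemma mul_exp_le_of_neg {l t : ℝ} (hl : l < 0) (ht : 0 ≤ t) : t * exp (l * t) ≤ 1 / (-l) := by
  have h1 : (-l) * t + 1 ≤ exp ((-l) * t) := add_one_le_exp _
  have h2 : (0:ℝ) < exp ((-l) * t) := exp_pos _
  have h3 : exp (l * t) = (exp ((-l) * t))⁻¹ := by
    rw [← Real.exp_neg]; ring_nf
  rw [h3, ← div_eq_mul_inv, div_le_div_iff₀ h2 (neg_pos.mpr hl)]
  nlinarith

variable {B : Type*} [MeasurableSpace B] {Q : Measure B} [IsProbabilityMeasure Q] {r : B → ℝ}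

lemma integrable_exp_mul (hr : Measurable r) (hr0 : ∀ y, 0 ≤ r y) {l : ℝ} (hl : l ≤ 0) :
    Integrable (fun y => exp (l * r y)) Q := by
  refine Integrable.mono' (integrable_const 1) ((hr.const_mul l).exp).aestronglyMeasurable ?_
  refine Eventually.of_forall fun y => ?_
  rw [Real.norm_eq_abs, abs_of_pos (exp_pos _)]
  exact exp_le_one_iff.mpr (mul_nonpos_of_nonpos_of_nonneg hl (hr0 y))

lemma Zpos (hr : Measurable r) (hr0 : ∀ y, 0 ≤ r y) {l : ℝ} (hl : l ≤ 0) :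
    0 < ∫ y, exp (l * r y) ∂Q :=
  mgf_pos (integrable_exp_mul hr hr0 hl)

lemma Zle_one (hr : Measurable r) (hr0 : ∀ y, 0 ≤ r y) {l : ℝ} (hl : l ≤ 0) :
    ∫ y, exp (l * r y) ∂Q ≤ 1 := by
  calc ∫ y, exp (l * r y) ∂Q ≤ ∫ _y, (1:ℝ) ∂Q := by
        refine integral_mono (integrable_exp_mul hr hr0 hl) (integrable_const 1) fun y => ?_
        exact exp_le_one_iff.mpr (mul_nonpos_of_nonpos_of_nonneg hl (hr0 y))
    _ = 1 := by simp

lemma integrable_mul_exp (hr : Measurable r) (hr0 : ∀ y, 0 ≤ r y) {l : ℝ} (hl : l < 0) :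
    Integrable (fun y => r y * exp (l * r y)) Q := by
  refine Integrable.mono' (integrable_const (1 / (-l)))
    (hr.mul (hr.const_mul l).exp).aestronglyMeasurable ?_
  refine Eventually.of_forall fun y => ?_
  rw [Real.norm_eq_abs, abs_of_nonneg (mul_nonneg (hr0 y) (exp_pos _).le)]
  exact mul_exp_le_of_neg hl (hr0 y)

lemma Zmono (hr : Measurable r) (hr0 : ∀ y, 0 ≤ r y) {l l' : ℝ} (hll' : l ≤ l') (hl' : l' ≤ 0) :
    ∫ y, exp (l * r y) ∂Q ≤ ∫ y, exp (l' * r y) ∂Q := by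
  refine integral_mono (integrable_exp_mul hr hr0 (hll'.trans hl'))
    (integrable_exp_mul hr hr0 hl') fun y => ?_
  exact exp_le_exp.mpr (mul_le_mul_of_nonneg_right hll' (hr0 y))

lemma hasDerivAt_Z (hr : Measurable r) (hr0 : ∀ y, 0 ≤ r y) {lam : ℝ} (hlam : lam < 0) :
    HasDerivAt (fun l => ∫ y, exp (l * r y) ∂Q) (∫ y, r y * exp (lam * r y) ∂Q) lam := by
  have hε : (0:ℝ) < -lam / 2 := by linarith
  refine (hasDerivAt_integral_of_dominated_loc_of_deriv_le (F := fun l y => exp (l * r y))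
    (F' := fun l y => r y * exp (l * r y)) (bound := fun _ => 1 / (-(lam / 2))) (Metric.ball_mem_nhds lam hε)
    (Eventually.of_forall fun l => ((hr.const_mul l).exp).aestronglyMeasurable)
    (integrable_exp_mul hr hr0 hlam.le)
    (hr.mul (hr.const_mul lam).exp).aestronglyMeasurable ?_ (integrable_const _) ?_).2
  · refine Eventually.of_forall fun y => fun t ht => ?_
    have ht' : t ≤ lam / 2 := by
      rw [Metric.mem_ball, Real.dist_eq, abs_lt] at ht; linarith [ht.2]
    rw [Real.norm_eq_abs, abs_of_nonneg (mul_nonneg (hr0 y) (exp_pos _).le)]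
    calc r y * exp (t * r y) ≤ r y * exp ((lam / 2) * r y) := by
          exact mul_le_mul_of_nonneg_left
            (exp_le_exp.mpr (mul_le_mul_of_nonneg_right ht' (hr0 y))) (hr0 y)
      _ ≤ 1 / (-(lam / 2)) := mul_exp_le_of_neg (by linarith) (hr0 y)
  · refine Eventually.of_forall fun y => fun t _ => ?_
    simpa [mul_comm] using (hasDerivAt_mul_const (r y)).exp

lemma hasDerivAt_logZ (hr : Measurable r) (hr0 : ∀ y, 0 ≤ r y) {lam : ℝ} (hlam : lam < 0) :
    HasDerivAt (fun l => log (∫ y, exp (l * r y) ∂Q))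
      ((∫ y, r y * exp (lam * r y) ∂Q) / ∫ y, exp (lam * r y) ∂Q) lam :=
  (hasDerivAt_Z hr hr0 hlam).log (Zpos hr hr0 hlam.le).ne'

lemma exp_jensen (hr : Measurable r) (hr0 : ∀ y, 0 ≤ r y) (hri : Integrable r Q) {l : ℝ}
    (hl : l ≤ 0) : exp (l * ∫ y, r y ∂Q) ≤ ∫ y, exp (l * r y) ∂Q := by
  set m := l * ∫ y, r y ∂Q with hm
  have key : ∀ y, exp m * (l * r y - m + 1) ≤ exp (l * r y) := by
    intro y
    have h1 := add_one_le_exp (l * r y - m)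
    have h2 : exp m * (l * r y - m + 1) ≤ exp m * exp (l * r y - m) :=
      mul_le_mul_of_nonneg_left h1 (exp_pos m).le
    rwa [← Real.exp_add, add_sub_cancel] at h2
  have hint1 : Integrable (fun y => exp m * (l * r y - m + 1)) Q :=
    (((hri.const_mul l).sub (integrable_const m)).add (integrable_const 1)).const_mul _
  calc exp m = ∫ y, exp m * (l * r y - m + 1) ∂Q := by
        rw [integral_const_mul]
        have h4 : ∫ y, (l * r y - m + 1) ∂Q = 1 := by
          have hA : Integrable (fun y => l * r y - m) Q :=
            (hri.const_mul l).sub (integrable_const m)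
          have hB : Integrable (fun y => l * r y) Q := hri.const_mul l
          rw [integral_add hA (integrable_const 1),
            integral_sub hB (integrable_const m), integral_const_mul]
          simp [hm]
        rw [h4, mul_one]
    _ ≤ ∫ y, exp (l * r y) ∂Q :=
        integral_mono hint1 (integrable_exp_mul hr hr0 hl) key

lemma holder (hr : Measurable r) (hr0 : ∀ y, 0 ≤ r y) {l₁ l₂ a b : ℝ} (h1 : l₁ ≤ 0)
    (h2 : l₂ ≤ 0) (ha : 0 ≤ a) (hb : 0 ≤ b) (hab : a + b = 1) :
    ∫ y, exp ((a * l₁ + b * l₂) * r y) ∂Q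
      ≤ (∫ y, exp (l₁ * r y) ∂Q) ^ a * (∫ y, exp (l₂ * r y) ∂Q) ^ b := by
  rcases ha.eq_or_lt with haz | hapos
  · have hb1 : b = 1 := by linarith
    rw [← haz, hb1]
    simp
  rcases hb.eq_or_lt with hbz | hbpos
  · have ha1 : a = 1 := by linarith
    rw [← hbz, ha1]
    simp
  have ha1 : a < 1 := by linarith
  have hpq : Real.HolderConjugate (1 / a) (1 / b) := by
    rw [Real.holderConjugate_iff]; constructor
    · exact one_lt_one_div hapos ha1
    · rw [one_div, one_div, inv_inv, inv_inv]; exact hab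
  have hfm : Measurable fun y => ENNReal.ofReal (exp (a * l₁ * r y)) :=
    ((hr.const_mul _).exp).ennreal_ofReal
  have hgm : Measurable fun y => ENNReal.ofReal (exp (b * l₂ * r y)) :=
    ((hr.const_mul _).exp).ennreal_ofReal
  have key := ENNReal.lintegral_mul_le_Lp_mul_Lq Q hpq hfm.aemeasurable hgm.aemeasurable
  have hal : a * l₁ ≤ 0 := mul_nonpos_of_nonneg_of_nonpos ha h1
  have hbl : b * l₂ ≤ 0 := mul_nonpos_of_nonneg_of_nonpos hb h2
  have habl : a * l₁ + b * l₂ ≤ 0 := by linarith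
  have hfg : ∀ y, (fun y => ENNReal.ofReal (exp (a * l₁ * r y))) y *
      (fun y => ENNReal.ofReal (exp (b * l₂ * r y))) y
        = ENNReal.ofReal (exp ((a * l₁ + b * l₂) * r y)) := by
    intro y
    rw [← ENNReal.ofReal_mul (exp_pos _).le, ← Real.exp_add]
    ring_nf
  have hfp : ∀ y, ENNReal.ofReal (exp (a * l₁ * r y)) ^ (1 / a)
      = ENNReal.ofReal (exp (l₁ * r y)) := by
    intro y
    rw [ENNReal.ofReal_rpow_of_pos (exp_pos _), ← Real.exp_mul]
    congr 2
    field_simp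
  have hgp : ∀ y, ENNReal.ofReal (exp (b * l₂ * r y)) ^ (1 / b)
      = ENNReal.ofReal (exp (l₂ * r y)) := by
    intro y
    rw [ENNReal.ofReal_rpow_of_pos (exp_pos _), ← Real.exp_mul]
    congr 2
    field_simp
  have e0 : ∫⁻ y, ENNReal.ofReal (exp ((a * l₁ + b * l₂) * r y)) ∂Q
      = ENNReal.ofReal (∫ y, exp ((a * l₁ + b * l₂) * r y) ∂Q) :=
    (ofReal_integral_eq_lintegral_ofReal (integrable_exp_mul hr hr0 habl)
      (Eventually.of_forall fun y => (exp_pos _).le)).symm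
  have e1 : ∫⁻ y, ENNReal.ofReal (exp (l₁ * r y)) ∂Q
      = ENNReal.ofReal (∫ y, exp (l₁ * r y) ∂Q) :=
    (ofReal_integral_eq_lintegral_ofReal (integrable_exp_mul hr hr0 h1)
      (Eventually.of_forall fun y => (exp_pos _).le)).symm
  have e2 : ∫⁻ y, ENNReal.ofReal (exp (l₂ * r y)) ∂Q
      = ENNReal.ofReal (∫ y, exp (l₂ * r y) ∂Q) :=
    (ofReal_integral_eq_lintegral_ofReal (integrable_exp_mul hr hr0 h2)
      (Eventually.of_forall fun y => (exp_pos _).le)).symm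
  simp only [Pi.mul_apply] at key
  rw [lintegral_congr hfg, e0] at key
  rw [lintegral_congr hfp, lintegral_congr hgp, e1, e2, one_div_one_div, one_div_one_div] at key
  rw [ENNReal.ofReal_rpow_of_pos (Zpos hr hr0 h1), ENNReal.ofReal_rpow_of_pos (Zpos hr hr0 h2),
    ← ENNReal.ofReal_mul (Real.rpow_nonneg (Zpos hr hr0 h1).le a)] at key
  exact (ENNReal.ofReal_le_ofReal_iff (by positivity)).mp key

lemma slope_ineq (hr : Measurable r) (hr0 : ∀ y, 0 ≤ r y) {lam t t₀ : ℝ} (hlam : lam < 0)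
    (ht₀ : t₀ = -lam / 2) (ht : 0 < t) (htt₀ : t ≤ t₀) :
    (log (∫ y, exp ((lam + t) * r y) ∂Q) - log (∫ y, exp (lam * r y) ∂Q)) / t
      ≤ (log (∫ y, exp ((lam + t₀) * r y) ∂Q) - log (∫ y, exp (lam * r y) ∂Q)) / t₀ := by
  have ht₀pos : 0 < t₀ := by rw [ht₀]; linarith
  have hl1 : lam + t₀ ≤ 0 := by rw [ht₀]; linarith
  have hlt : lam + t ≤ 0 := by linarith
  set a := t / t₀ with hadef
  set b := 1 - t / t₀ with hbdef
  have hapos : 0 ≤ a := div_nonneg ht.le ht₀pos.le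
  have hbpos : 0 ≤ b := by
    rw [hbdef, sub_nonneg, div_le_one ht₀pos]; exact htt₀
  have hab : a + b = 1 := by rw [hadef, hbdef]; ring
  have hat : a * t₀ = t := div_mul_cancel₀ t ht₀pos.ne'
  have hcomb : a * (lam + t₀) + b * lam = lam + t := by
    rw [hadef, hbdef]; field_simp; ring
  have H := holder (Q := Q) hr hr0 hl1 hlam.le hapos hbpos hab
  rw [hcomb] at H
  have Hrhs : 0 < (∫ y, exp ((lam + t₀) * r y) ∂Q) ^ a * (∫ y, exp (lam * r y) ∂Q) ^ b :=
    mul_pos (Real.rpow_pos_of_pos (Zpos hr hr0 hl1) a)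
      (Real.rpow_pos_of_pos (Zpos hr hr0 hlam.le) b)
  have Hlog := (Real.log_le_log_iff (Zpos hr hr0 hlt) Hrhs).mpr H
  rw [Real.log_mul (Real.rpow_pos_of_pos (Zpos hr hr0 hl1) a).ne'
      (Real.rpow_pos_of_pos (Zpos hr hr0 hlam.le) b).ne',
    Real.log_rpow (Zpos hr hr0 hl1), Real.log_rpow (Zpos hr hr0 hlam.le)] at Hlog
  rw [div_le_div_iff₀ ht ht₀pos]
  set X0 := log (∫ y, exp (lam * r y) ∂Q)
  set X1 := log (∫ y, exp ((lam + t₀) * r y) ∂Q)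
  set Xt := log (∫ y, exp ((lam + t) * r y) ∂Q)
  have h5 : Xt * t₀ ≤ (a * X1 + b * X0) * t₀ := mul_le_mul_of_nonneg_right Hlog ht₀pos.le
  have h6 : (a * X1 + b * X0) * t₀ = t * X1 + (t₀ - t) * X0 := by
    rw [hbdef]
    linear_combination (X1 - X0) * hat
  linarith

lemma tendsto_slope_seq {F : ℝ → ℝ} {d lam : ℝ} {t : ℕ → ℝ} (ht : ∀ n, t n ≠ 0)
    (ht0 : Tendsto t atTop (nhds 0)) (hF : HasDerivAt F d lam) :
    Tendsto (fun n => (F (lam + t n) - F lam) / t n) atTop (nhds d) := by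
  have h1 := hasDerivAt_iff_tendsto_slope.mp hF
  have h2 : Tendsto (fun n => lam + t n) atTop (nhdsWithin lam {lam}ᶜ) := by
    refine tendsto_nhdsWithin_of_tendsto_nhds_of_eventually_within _ ?_ ?_
    · simpa using tendsto_const_nhds.add ht0
    · exact Eventually.of_forall fun n => by simp [ht n]
  refine (h1.comp h2).congr fun n => ?_
  simp only [Function.comp_apply, slope_def_field]
  rw [add_sub_cancel_left]

lemma integral_withDensity_ofReal {X : Type*} [MeasurableSpace X] {μ : Measure X} {f : X → ℝ}
    (hf : Measurable f) (hf0 : ∀ x, 0 ≤ f x) (g : X → ℝ) :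
    ∫ x, g x ∂(μ.withDensity fun x => ENNReal.ofReal (f x)) = ∫ x, f x * g x ∂μ := by
  have h1 : (fun x => ENNReal.ofReal (f x)) = fun x => ((f x).toNNReal : ℝ≥0∞) := rfl
  rw [h1, integral_withDensity_eq_integral_smul hf.real_toNNReal]
  congr 1
  ext x
  rw [NNReal.smul_def, Real.coe_toNNReal _ (hf0 x), smul_eq_mul]

lemma integrable_withDensity_ofReal {X : Type*} [MeasurableSpace X] {μ : Measure X} {f : X → ℝ}
    (hf : Measurable f) (hf0 : ∀ x, 0 ≤ f x) (g : X → ℝ) :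
    Integrable g (μ.withDensity fun x => ENNReal.ofReal (f x))
      ↔ Integrable (fun x => f x * g x) μ := by
  have h1 : (fun x => ENNReal.ofReal (f x)) = fun x => ((f x).toNNReal : ℝ≥0∞) := rfl
  rw [h1, integrable_withDensity_iff_integrable_smul hf.real_toNNReal]
  constructor <;> intro h <;> refine h.congr (Eventually.of_forall fun x => ?_) <;>
    simp only [NNReal.smul_def, Real.coe_toNNReal _ (hf0 x), smul_eq_mul]

end RelEntAux

open scoped ENNReal NNReal in
set_option maxHeartbeats 2000000 in
open Filter in
/-- The relative entropy of the tilted measure `W` w.r.t. `P × Q` equals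
`λ* D − Λ(λ*)`, and hence the rate-function
`R₁(P,Q,D) = inf { H(W'‖P×Q) : W' has first marginal P, E_{W'}[ρ] ≤ D }`
satisfies `R₁(P,Q,D) ≤ λ* D − Λ(λ*)`. -/
theorem relEntropy_tilted_eq_and_rateFunction_le
    {A B : Type*} [MeasurableSpace A] [MeasurableSpace B]
    (P : Measure A) (Q : Measure B) [IsProbabilityMeasure P] [IsProbabilityMeasure Q]
    (ρ : A → B → ℝ) (hρm : Measurable (Function.uncurry ρ)) (hρ0 : ∀ x y, 0 ≤ ρ x y)
    (hint : Integrable (fun p : A × B => ρ p.1 p.2) (P.prod Q))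
    (lam D : ℝ) (hlam : lam < 0)
    (hderiv : HasDerivAt
      (fun l : ℝ => ∫ x, Real.log (∫ y, Real.exp (l * ρ x y) ∂Q) ∂P) D lam)
    (W : Measure (A × B))
    (hW : W = (P.prod Q).withDensity (fun p =>
        ENNReal.ofReal (Real.exp (lam * ρ p.1 p.2) / ∫ y, Real.exp (lam * ρ p.1 y) ∂Q))) :
    relEntropy W (P.prod Q)
        = lam * D - ∫ x, Real.log (∫ y, Real.exp (lam * ρ x y) ∂Q) ∂P ∧
    sInf {r : ℝ | ∃ W' : Measure (A × B), IsProbabilityMeasure W' ∧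
        W'.map Prod.fst = P ∧ (∫ p, ρ p.1 p.2 ∂W') ≤ D ∧ r = relEntropy W' (P.prod Q)}
      ≤ lam * D - ∫ x, Real.log (∫ y, Real.exp (lam * ρ x y) ∂Q) ∂P := by
  subst hW
  have hρ2 : Measurable fun p : A × B => ρ p.1 p.2 := hρm
  have hrx : ∀ x : A, Measurable (ρ x) := fun x => hρm.of_uncurry_left
  have hZm : ∀ l : ℝ, Measurable fun x => ∫ y, exp (l * ρ x y) ∂Q := fun l =>
    (((hρ2.const_mul l).exp).stronglyMeasurable.integral_prod_right').measurable
  have hZ'm : Measurable fun x => ∫ y, ρ x y * exp (lam * ρ x y) ∂Q :=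
    ((hρ2.mul (hρ2.const_mul lam).exp).stronglyMeasurable.integral_prod_right').measurable
  have hZpos : ∀ x : A, ∀ l : ℝ, l ≤ 0 → 0 < ∫ y, exp (l * ρ x y) ∂Q := fun x l hl =>
    RelEntAux.Zpos (hrx x) (hρ0 x) hl
  have ht0pos : (0:ℝ) < -lam / 2 := by linarith
  have hbar : Integrable (fun x => ∫ y, ρ x y ∂Q) P := hint.integral_prod_left
  have hlogZint : ∀ l : ℝ, lam ≤ l → l ≤ 0 →
      Integrable (fun x => log (∫ y, exp (l * ρ x y) ∂Q)) P := by
    intro l hl1 hl2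
    refine Integrable.mono' (hbar.const_mul (-lam)) ((hZm l).log).aestronglyMeasurable ?_
    filter_upwards [hint.prod_right_ae] with x hx
    have hxint : Integrable (ρ x) Q := hx
    have h1 : log (∫ y, exp (l * ρ x y) ∂Q) ≤ 0 :=
      Real.log_nonpos (hZpos x l hl2).le (RelEntAux.Zle_one (hrx x) (hρ0 x) hl2)
    have h2 : l * ∫ y, ρ x y ∂Q ≤ log (∫ y, exp (l * ρ x y) ∂Q) := by
      have hj := RelEntAux.exp_jensen (hrx x) (hρ0 x) hxint hl2
      have h5 := (Real.log_le_log_iff (exp_pos _) (hZpos x l hl2)).mpr hj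
      rwa [Real.log_exp] at h5
    have h3 : 0 ≤ ∫ y, ρ x y ∂Q := integral_nonneg (hρ0 x)
    rw [Real.norm_eq_abs, abs_of_nonpos h1]
    nlinarith
  -- the tilted conditional mean
  set h : A → ℝ := fun x =>
    (∫ y, ρ x y * exp (lam * ρ x y) ∂Q) / ∫ y, exp (lam * ρ x y) ∂Q with hhdef
  have hhm : Measurable h := hZ'm.div (hZm lam)
  have hh0 : ∀ x, 0 ≤ h x := fun x =>
    div_nonneg (integral_nonneg fun y => mul_nonneg (hρ0 x y) (exp_pos _).le)
      (hZpos x lam hlam.le).le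
  set bdf : A → ℝ := fun x =>
    (log (∫ y, exp ((lam + -lam / 2) * ρ x y) ∂Q) - log (∫ y, exp (lam * ρ x y) ∂Q)) /
      (-lam / 2) with hbdfdef
  have hbd_int : Integrable bdf P :=
    ((hlogZint (lam + -lam / 2) (by linarith) (by linarith)).sub
      (hlogZint lam le_rfl hlam.le)).div_const _
  set ts : ℕ → ℝ := fun n => (-lam / 2) / (n + 1) with htsdef
  have hts_pos : ∀ n, 0 < ts n := fun n => div_pos ht0pos (by positivity)
  have hts_le : ∀ n, ts n ≤ -lam / 2 := fun n =>
    div_le_self ht0pos.le (by simp only [le_add_iff_nonneg_left]; positivity)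
  have hts_lim : Tendsto ts atTop (nhds 0) := by
    refine Tendsto.div_atTop tendsto_const_nhds ?_
    exact tendsto_atTop_add_const_right _ 1 tendsto_natCast_atTop_atTop
  have hslope_le : ∀ n, ∀ x : A,
      (log (∫ y, exp ((lam + ts n) * ρ x y) ∂Q) - log (∫ y, exp (lam * ρ x y) ∂Q)) / ts n
        ≤ bdf x := fun n x =>
    RelEntAux.slope_ineq (hrx x) (hρ0 x) hlam rfl (hts_pos n) (hts_le n)
  have hslope_nonneg : ∀ n, ∀ x : A, 0 ≤
      (log (∫ y, exp ((lam + ts n) * ρ x y) ∂Q) - log (∫ y, exp (lam * ρ x y) ∂Q)) / ts n := by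
    intro n x
    refine div_nonneg ?_ (hts_pos n).le
    rw [sub_nonneg]
    have hle : lam + ts n ≤ 0 := by linarith [hts_le n]
    have hmono := RelEntAux.Zmono (Q := Q) (hrx x) (hρ0 x)
      (le_add_of_nonneg_right (hts_pos n).le) hle
    exact (Real.log_le_log_iff (hZpos x lam hlam.le) (hZpos x _ hle)).mpr hmono
  have hptw : ∀ x : A, Tendsto (fun n =>
      (log (∫ y, exp ((lam + ts n) * ρ x y) ∂Q) - log (∫ y, exp (lam * ρ x y) ∂Q)) / ts n)
      atTop (nhds (h x)) := fun x =>
    RelEntAux.tendsto_slope_seq (fun n => (hts_pos n).ne') hts_lim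
      (RelEntAux.hasDerivAt_logZ (hrx x) (hρ0 x) hlam)
  have hh_le_bdf : ∀ x, h x ≤ bdf x := fun x =>
    le_of_tendsto (hptw x) (Eventually.of_forall fun n => hslope_le n x)
  have hhint : Integrable h P := by
    refine Integrable.mono' hbd_int hhm.aestronglyMeasurable (Eventually.of_forall fun x => ?_)
    rw [Real.norm_eq_abs, abs_of_nonneg (hh0 x)]
    exact hh_le_bdf x
  have hDeq : ∫ x, h x ∂P = D := by
    have hlim1 : Tendsto (fun n => ∫ x,
        (log (∫ y, exp ((lam + ts n) * ρ x y) ∂Q) - log (∫ y, exp (lam * ρ x y) ∂Q)) / ts n ∂P)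
        atTop (nhds (∫ x, h x ∂P)) := by
      refine tendsto_integral_of_dominated_convergence bdf ?_ hbd_int ?_ ?_
      · intro n
        exact (((hZm (lam + ts n)).log.sub (hZm lam).log).div_const _).aestronglyMeasurable
      · intro n
        refine Eventually.of_forall fun x => ?_
        rw [Real.norm_eq_abs, abs_of_nonneg (hslope_nonneg n x)]
        exact hslope_le n x
      · exact Eventually.of_forall hptw
    have hlim2 : Tendsto (fun n => ∫ x,
        (log (∫ y, exp ((lam + ts n) * ρ x y) ∂Q) - log (∫ y, exp (lam * ρ x y) ∂Q)) / ts n ∂P)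
        atTop (nhds D) := by
      have hmain := RelEntAux.tendsto_slope_seq
        (F := fun l : ℝ => ∫ x, log (∫ y, exp (l * ρ x y) ∂Q) ∂P)
        (fun n => (hts_pos n).ne') hts_lim hderiv
      refine hmain.congr fun n => ?_
      rw [← integral_sub (hlogZint (lam + ts n) (by linarith [hts_pos n]) (by
            linarith [hts_le n])) (hlogZint lam le_rfl hlam.le), ← integral_div]
    exact tendsto_nhds_unique hlim1 hlim2
  -- now the tilted measure
  set f : A × B → ℝ := fun p => exp (lam * ρ p.1 p.2) / ∫ y, exp (lam * ρ p.1 y) ∂Q with hfdef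
  set F : A × B → ℝ≥0∞ := fun p =>
    ENNReal.ofReal (exp (lam * ρ p.1 p.2) / ∫ y, exp (lam * ρ p.1 y) ∂Q) with hFdef
  have hFf : F = fun p => ENNReal.ofReal (f p) := rfl
  set Wm : Measure (A × B) := (P.prod Q).withDensity F with hWdef
  have hfm : Measurable f := by
    rw [hfdef]
    exact ((hρ2.const_mul lam).exp).div ((hZm lam).comp measurable_fst)
  have hf0 : ∀ p, 0 ≤ f p := fun p => by
    simp only [hfdef]
    exact div_nonneg (exp_pos _).le (hZpos p.1 lam hlam.le).le
  have hfpos : ∀ p : A × B, 0 < f p := fun p => by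
    simp only [hfdef]
    exact div_pos (exp_pos _) (hZpos p.1 lam hlam.le)
  have hFm : Measurable F := by rw [hFf]; exact hfm.ennreal_ofReal
  have hinner : ∀ x : A, ∫⁻ y, F (x, y) ∂Q = 1 := by
    intro x
    have hZx := hZpos x lam hlam.le
    have hne : ENNReal.ofReal (∫ y, exp (lam * ρ x y) ∂Q) ≠ 0 := (ENNReal.ofReal_pos.mpr hZx).ne'
    have step1 : ∀ y : B, F (x, y) = ENNReal.ofReal (exp (lam * ρ x y)) *
        (ENNReal.ofReal (∫ y', exp (lam * ρ x y') ∂Q))⁻¹ := by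
      intro y
      simp only [hFdef]
      rw [ENNReal.ofReal_div_of_pos hZx, div_eq_mul_inv]
    rw [lintegral_congr step1, lintegral_mul_const' _ _ (ENNReal.inv_ne_top.mpr hne),
      ← ofReal_integral_eq_lintegral_ofReal
        (RelEntAux.integrable_exp_mul (hrx x) (hρ0 x) hlam.le)
        (Eventually.of_forall fun y => (exp_pos _).le)]
    exact ENNReal.mul_inv_cancel hne ENNReal.ofReal_ne_top
  have hmap : Wm.map Prod.fst = P := by
    refine Measure.ext fun s hs => ?_
    rw [Measure.map_apply measurable_fst hs, hWdef, withDensity_apply _ (measurable_fst hs),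
      ← Set.prod_univ, ← Measure.prod_restrict, Measure.restrict_univ,
      lintegral_prod _ hFm.aemeasurable]
    have : ∀ x : A, ∫⁻ y, F (x, y) ∂Q = (1 : ℝ≥0∞) := hinner
    rw [lintegral_congr this, lintegral_one, Measure.restrict_apply_univ]
  have hWprob : IsProbabilityMeasure Wm := by
    constructor
    have h1 : Wm.map Prod.fst Set.univ = P Set.univ := by rw [hmap]
    rw [Measure.map_apply measurable_fst MeasurableSet.univ, Set.preimage_univ] at h1
    rw [h1, measure_univ]
  have hsec : ∀ x : A, ∫ y, f (x, y) ∂Q = 1 := by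
    intro x
    simp only [hfdef]
    rw [integral_div, div_self (hZpos x lam hlam.le).ne']
  have hcore : ∀ x : A, ∫ y, f (x, y) * ρ x y ∂Q = h x := by
    intro x
    have hptr : ∀ y, f (x, y) * ρ x y
        = (ρ x y * exp (lam * ρ x y)) / ∫ y', exp (lam * ρ x y') ∂Q := by
      intro y; simp only [hfdef]; ring
    simp only [hptr]
    rw [integral_div]
  have hfρ_int : Integrable (fun p : A × B => f p * ρ p.1 p.2) (P.prod Q) := by
    refine (integrable_prod_iff ((hfm.mul hρ2).aestronglyMeasurable)).mpr ⟨?_, ?_⟩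
    · refine Eventually.of_forall fun x => ?_
      have hZx := hZpos x lam hlam.le
      refine Integrable.mono'
        (integrable_const ((1 / (-lam)) / ∫ y, exp (lam * ρ x y) ∂Q))
        ((hfm.comp measurable_prodMk_left).mul (hrx x)).aestronglyMeasurable
        (Eventually.of_forall fun y => ?_)
      show ‖f (x, y) * ρ x y‖ ≤ _
      rw [Real.norm_eq_abs, abs_of_nonneg (mul_nonneg (hf0 _) (hρ0 x y))]
      simp only [hfdef]
      rw [div_mul_eq_mul_div, div_le_div_iff₀ hZx hZx]
      have hb := RelEntAux.mul_exp_le_of_neg hlam (hρ0 x y)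
      nlinarith
    · refine hhint.congr (Eventually.of_forall fun x => ?_)
      rw [← hcore x]
      refine integral_congr_ae (Eventually.of_forall fun y => ?_)
      exact (Real.norm_of_nonneg (mul_nonneg (hf0 _) (hρ0 x y))).symm
  have hρW_int : Integrable (fun p : A × B => ρ p.1 p.2) Wm := by
    rw [hWdef, hFf]
    exact (RelEntAux.integrable_withDensity_ofReal hfm hf0 _).mpr hfρ_int
  have hρW_val : ∫ p, ρ p.1 p.2 ∂Wm = D := by
    rw [hWdef, hFf, RelEntAux.integral_withDensity_ofReal hfm hf0,
      integral_prod _ hfρ_int, ← hDeq]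
    exact integral_congr_ae (Eventually.of_forall fun x => hcore x)
  have hflogZ_int : Integrable
      (fun p : A × B => f p * log (∫ y, exp (lam * ρ p.1 y) ∂Q)) (P.prod Q) := by
    have hmeasflog : Measurable fun p : A × B => f p * log (∫ y, exp (lam * ρ p.1 y) ∂Q) :=
      hfm.mul (((hZm lam).log).comp measurable_fst)
    refine (integrable_prod_iff
      (f := fun p : A × B => f p * log (∫ y, exp (lam * ρ p.1 y) ∂Q))
      hmeasflog.aestronglyMeasurable).mpr ⟨?_, ?_⟩
    · refine Eventually.of_forall fun x => ?_
      have hfi : Integrable (fun y => f (x, y)) Q := by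
        simp only [hfdef]
        exact (RelEntAux.integrable_exp_mul (hrx x) (hρ0 x) hlam.le).div_const _
      show Integrable (fun y => f (x, y) * log (∫ y', exp (lam * ρ x y') ∂Q)) Q
      exact hfi.mul_const _
    · refine ((hlogZint lam le_rfl hlam.le).abs).congr (Eventually.of_forall fun x => ?_)
      have hptr : ∀ y : B, ‖f (x, y) * log (∫ y', exp (lam * ρ x y') ∂Q)‖
          = f (x, y) * |log (∫ y', exp (lam * ρ x y') ∂Q)| := by
        intro y
        rw [norm_mul, Real.norm_eq_abs, Real.norm_eq_abs, abs_of_nonneg (hf0 _)]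
      simp only [hptr]
      rw [integral_mul_const, hsec x, one_mul]
  have hlogZW_int : Integrable
      (fun p : A × B => log (∫ y, exp (lam * ρ p.1 y) ∂Q)) Wm := by
    rw [hWdef, hFf]
    exact (RelEntAux.integrable_withDensity_ofReal hfm hf0 _).mpr hflogZ_int
  have hlogZW_val : ∫ p, log (∫ y, exp (lam * ρ p.1 y) ∂Q) ∂Wm
      = ∫ x, log (∫ y, exp (lam * ρ x y) ∂Q) ∂P := by
    rw [hWdef, hFf, RelEntAux.integral_withDensity_ofReal hfm hf0,
      integral_prod _ hflogZ_int]
    refine integral_congr_ae (Eventually.of_forall fun x => ?_)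
    show (∫ y, f (x, y) * log (∫ y', exp (lam * ρ x y') ∂Q) ∂Q)
      = log (∫ y, exp (lam * ρ x y) ∂Q)
    rw [integral_mul_const, hsec x, one_mul]
  have hrn : Wm.rnDeriv (P.prod Q) =ᵐ[P.prod Q] F := by
    rw [hWdef]; exact Measure.rnDeriv_withDensity (P.prod Q) hFm
  have hac : Wm ≪ P.prod Q := by
    rw [hWdef]; exact withDensity_absolutelyContinuous _ _
  have hrnW : ∀ᵐ p ∂Wm, Wm.rnDeriv (P.prod Q) p = F p := hrn.filter_mono hac.ae_le
  have hRE : relEntropy Wm (P.prod Q) = ∫ p, log (f p) ∂Wm := by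
    refine integral_congr_ae (hrnW.mono fun p hp => ?_)
    show log ((Wm.rnDeriv (P.prod Q)) p).toReal = log (f p)
    rw [hp]
    simp only [hFf]
    rw [ENNReal.toReal_ofReal (hf0 p)]
  have hlogf : ∀ p : A × B,
      log (f p) = lam * ρ p.1 p.2 - log (∫ y, exp (lam * ρ p.1 y) ∂Q) := by
    intro p
    simp only [hfdef]
    rw [Real.log_div (exp_pos _).ne' (hZpos p.1 lam hlam.le).ne', Real.log_exp]
  have part1 : relEntropy Wm (P.prod Q)
      = lam * D - ∫ x, log (∫ y, exp (lam * ρ x y) ∂Q) ∂P := by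
    rw [hRE]
    have e1 : ∫ p, log (f p) ∂Wm
        = ∫ p, (lam * ρ p.1 p.2 - log (∫ y, exp (lam * ρ p.1 y) ∂Q)) ∂Wm :=
      integral_congr_ae (Eventually.of_forall fun p => hlogf p)
    rw [e1, integral_sub (hρW_int.const_mul lam) hlogZW_int, integral_const_mul,
      hρW_val, hlogZW_val]
  have hgibbs : 0 ≤ relEntropy Wm (P.prod Q) := by
    rw [hRE]
    have hlogf_int : Integrable (fun p => log (f p)) Wm :=
      Integrable.congr ((hρW_int.const_mul lam).sub hlogZW_int)
        (Eventually.of_forall fun p => (hlogf p).symm)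
    have hid : ∀ p : A × B, f p * (1 / f p) = 1 := fun p =>
      (mul_one_div (f p) (f p)).trans (div_self (hfpos p).ne')
    have hinv_int : Integrable (fun p => 1 / f p) Wm := by
      rw [hWdef, hFf]
      refine (RelEntAux.integrable_withDensity_ofReal hfm hf0 _).mpr ?_
      exact (integrable_const (1:ℝ)).congr (Eventually.of_forall fun p => (hid p).symm)
    have hinv_val : ∫ p, 1 / f p ∂Wm = 1 := by
      rw [hWdef, hFf, RelEntAux.integral_withDensity_ofReal hfm hf0]
      rw [integral_congr_ae (Eventually.of_forall hid)]
      simp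
    have hmono : ∫ p, -log (f p) ∂Wm ≤ ∫ p, (1 / f p - 1) ∂Wm := by
      refine integral_mono hlogf_int.neg (hinv_int.sub (integrable_const 1)) fun p => ?_
      have h1 := Real.log_le_sub_one_of_pos (one_div_pos.mpr (hfpos p))
      have h2 : log (1 / f p) = -log (f p) := by rw [one_div, Real.log_inv]
      linarith
    rw [integral_neg, integral_sub hinv_int (integrable_const 1), hinv_val] at hmono
    have hone : ∫ _ : A × B, (1:ℝ) ∂Wm = 1 := by
      haveI := hWprob; simp
    rw [hone] at hmono
    linarith
  refine ⟨part1, ?_⟩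
  by_cases hbdd : BddBelow {r : ℝ | ∃ W' : Measure (A × B), IsProbabilityMeasure W' ∧
      W'.map Prod.fst = P ∧ (∫ p, ρ p.1 p.2 ∂W') ≤ D ∧ r = relEntropy W' (P.prod Q)}
  · refine csInf_le hbdd ?_
    exact ⟨Wm, hWprob, hmap, le_of_eq hρW_val, part1.symm⟩
  · rw [Real.sInf_of_not_bddBelow hbdd, ← part1]
    exact hgibbs
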